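/- Let K ⊆ ℝⁿ be a compact, convex, symmetric (K = −K) set with 0 in its interior, let m > 0 be a real number, and define f(x) := Vol({ξ ∈ K : |⟨ξ, x⟩| ≤ 1}) / Vol(K) for x ∈ ℝⁿ. Define F(x, ξ) := (2π)^{n/2} · exp(‖ξ‖²/2 − max(|⟨ξ, x⟩|^m, gauge(K, ξ)^m)) and the standard Gaussian density p(ξ) := (2π)^{−n/2} e^{−‖ξ‖²/2}. Then for every x ∈ ℝⁿ, f(x) = C · ∫_{ℝⁿ} F(x, ξ) p(ξ) dξ, where C = 1/(Vol(K) · Γ(1 + n/m)). -/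
import Mathlib


open MeasureTheory Filter
open scoped InnerProductSpace

/-- Theorem 1: the uniform probability `f(x) = Vol({ξ ∈ K : |⟨ξ,x⟩| ≤ 1})/Vol(K)` equals
`C` times the standard-Gaussian expectation of `F(x,·)`. -/
theorem stmt_4 {n : ℕ} (K : Set (EuclideanSpace ℝ (Fin n)))
    (hKcomp : IsCompact K) (hKconv : Convex ℝ K) (hKsym : K = -K)
    (hK0 : 0 ∈ interior K) (m : ℝ) (hm : 0 < m)
    (x : EuclideanSpace ℝ (Fin n)) :
    (volume {ξ ∈ K | |⟪ξ, x⟫_ℝ| ≤ 1}).toReal / (volume K).toReal =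
      (1 / ((volume K).toReal * Real.Gamma (1 + n / m))) *
        ∫ ξ : EuclideanSpace ℝ (Fin n),
          ((2 * Real.pi) ^ ((n : ℝ) / 2) *
              Real.exp (‖ξ‖ ^ 2 / 2 - max (|⟪ξ, x⟫_ℝ| ^ m) (gauge K ξ ^ m))) *
            ((2 * Real.pi) ^ (-(n : ℝ) / 2) * Real.exp (-‖ξ‖ ^ 2 / 2)) := by
  set g : EuclideanSpace ℝ (Fin n) → ℝ := fun ξ => max |⟪ξ, x⟫_ℝ| (gauge K ξ) with hgdef
  have hKnhds : K ∈ nhds (0 : EuclideanSpace ℝ (Fin n)) := mem_interior_iff_mem_nhds.mp hK0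
  have habs : Absorbent ℝ K := absorbent_nhds_zero hKnhds
  have hKvb : Bornology.IsVonNBounded ℝ K :=
    NormedSpace.isVonNBounded_of_isBounded _ hKcomp.isBounded
  have hsymm : ∀ y ∈ K, -y ∈ K := by
    intro y hy
    rw [hKsym]
    exact Set.neg_mem_neg.mpr hy
  have h1 : g 0 = 0 := by simp [hgdef, gauge_zero]
  have h2 : ∀ ξ, g (-ξ) = g ξ := by
    intro ξ
    simp [hgdef, inner_neg_left, abs_neg, gauge_neg hsymm]
  have h3 : ∀ ξ η, g (ξ + η) ≤ g ξ + g η := by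
    intro ξ η
    refine max_le ?_ ?_
    · calc |⟪ξ + η, x⟫_ℝ| = |⟪ξ, x⟫_ℝ + ⟪η, x⟫_ℝ| := by rw [inner_add_left]
        _ ≤ |⟪ξ, x⟫_ℝ| + |⟪η, x⟫_ℝ| := abs_add_le _ _
        _ ≤ g ξ + g η := add_le_add (le_max_left _ _) (le_max_left _ _)
    · calc gauge K (ξ + η) ≤ gauge K ξ + gauge K η := gauge_add_le hKconv habs _ _
        _ ≤ g ξ + g η := add_le_add (le_max_right _ _) (le_max_right _ _)
  have h4 : ∀ {ξ : EuclideanSpace ℝ (Fin n)}, g ξ = 0 → ξ = 0 := by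
    intro ξ hξ
    have hle : gauge K ξ ≤ 0 := hξ ▸ le_max_right _ _
    exact (gauge_eq_zero habs hKvb).mp (le_antisymm hle (gauge_nonneg _))
  have hgsmul : ∀ (r : ℝ) (ξ : EuclideanSpace ℝ (Fin n)), gauge K (r • ξ) = |r| * gauge K ξ := by
    intro r ξ
    rcases le_or_gt 0 r with h | h
    · rw [gauge_smul_of_nonneg h, smul_eq_mul, abs_of_nonneg h]
    · rw [show r • ξ = -((-r) • ξ) by rw [neg_smul, neg_neg], gauge_neg hsymm,
        gauge_smul_of_nonneg (by linarith : (0:ℝ) ≤ -r), smul_eq_mul, abs_of_neg h]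
  have h5 : ∀ (r : ℝ) (ξ : EuclideanSpace ℝ (Fin n)), g (r • ξ) ≤ |r| * g ξ := by
    intro r ξ
    have : g (r • ξ) = |r| * g ξ := by
      rw [hgdef]
      simp only [real_inner_smul_left, abs_mul, hgsmul]
      exact (mul_max_of_nonneg _ _ (abs_nonneg r)).symm
    exact this.le
  have hset : {ξ ∈ K | |⟪ξ, x⟫_ℝ| ≤ 1} = {ξ : EuclideanSpace ℝ (Fin n) | g ξ ≤ 1} := by
    ext ξ
    simp only [Set.mem_setOf_eq, Set.mem_sep_iff, hgdef, max_le_iff]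
    rw [gauge_le_one_iff_mem_closure hKconv hKnhds, hKcomp.isClosed.closure_eq, and_comm]
  have hInonneg : 0 ≤ ∫ ξ : EuclideanSpace ℝ (Fin n), Real.exp (-(g ξ) ^ m) :=
    integral_nonneg fun ξ => (Real.exp_pos _).le
  have key : volume {ξ : EuclideanSpace ℝ (Fin n) | g ξ ≤ 1} =
      ENNReal.ofReal ((∫ ξ : EuclideanSpace ℝ (Fin n), Real.exp (-(g ξ) ^ m)) /
        Real.Gamma (Module.finrank ℝ (EuclideanSpace ℝ (Fin n)) / m + 1)) := by
    rcases subsingleton_or_nontrivial (EuclideanSpace ℝ (Fin n)) with hE | hE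
    · have hlt : {ξ : EuclideanSpace ℝ (Fin n) | g ξ ≤ 1} = {ξ : EuclideanSpace ℝ (Fin n) | g ξ < 1} := by
        ext ξ
        have : ξ = 0 := Subsingleton.elim _ _
        simp [this, h1, Set.mem_setOf_eq, zero_lt_one]
      rw [hlt]
      exact MeasureTheory.measure_lt_one_eq_integral_div_gamma volume h1 h2 h3 h4 h5 hm
    · rw [MeasureTheory.measure_le_eq_lt volume h1 h2 h3 h4 h5 (1 : ℝ)]
      exact MeasureTheory.measure_lt_one_eq_integral_div_gamma volume h1 h2 h3 h4 h5 hm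
  have hfr : (Module.finrank ℝ (EuclideanSpace ℝ (Fin n)) : ℝ) = n := by
    rw [show Module.finrank ℝ (EuclideanSpace ℝ (Fin n)) = n from finrank_euclideanSpace_fin]
  have hGamma : 0 < Real.Gamma (1 + n / m) := by
    apply Real.Gamma_pos_of_pos
    positivity
  have hint : ∀ ξ : EuclideanSpace ℝ (Fin n),
      ((2 * Real.pi) ^ ((n : ℝ) / 2) *
          Real.exp (‖ξ‖ ^ 2 / 2 - max (|⟪ξ, x⟫_ℝ| ^ m) (gauge K ξ ^ m))) *
        ((2 * Real.pi) ^ (-(n : ℝ) / 2) * Real.exp (-‖ξ‖ ^ 2 / 2)) =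
      Real.exp (-(g ξ) ^ m) := by
    intro ξ
    have hmax : max (|⟪ξ, x⟫_ℝ| ^ m) (gauge K ξ ^ m) = (g ξ) ^ m := by
      rcases le_total |⟪ξ, x⟫_ℝ| (gauge K ξ) with h | h
      · rw [hgdef]
        simp only [max_eq_right h,
          max_eq_right (Real.rpow_le_rpow (abs_nonneg _) h hm.le)]
      · rw [hgdef]
        simp only [max_eq_left h,
          max_eq_left (Real.rpow_le_rpow (gauge_nonneg _) h hm.le)]
    rw [hmax, mul_mul_mul_comm, ← Real.rpow_add (by positivity), ← Real.exp_add,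
      show (n : ℝ) / 2 + -(n : ℝ) / 2 = 0 by ring, Real.rpow_zero, one_mul]
    congr 1
    ring
  simp only [hint]
  rw [hset, key, hfr, ENNReal.toReal_ofReal (by positivity), add_comm ((n : ℝ) / m) 1]
  rw [div_div, one_div, inv_mul_eq_div, mul_comm (Real.Gamma (1 + n / m)) _]
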